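/- Suppose Y ∈ L²(P), E[Y | Z, X] = g₀(Z,X) a.s., and E[(Y − g₀(Z,X))² | X] ≤ c₁ a.s. for some c₁ > 0. Let g(1,·) : 𝒳 → ℝ and p : 𝒳 → (0,1) be measurable with ε ≤ p(X) ≤ 1 − ε and ε ≤ p₀(X) ≤ 1 − ε a.s., and with g(1,X) − g₀(1,X) ∈ L²(P) and p(X) − p₀(X) ∈ L²(P). Then ‖Z(Y − g(1,X))/p(X) − Z(Y − g₀(1,X))/p₀(X)‖_{P,2} ≤ ε^{−2} (‖g(1,X) − g₀(1,X)‖_{P,2} + √c₁ · ‖p(X) − p₀(X)‖_{P,2}). -/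

import Mathlib

open MeasureTheory
open scoped ENNReal NNReal

lemma memLp_two_condexp_aux {α : Type*} {m m0 : MeasurableSpace α} (hm : m ≤ m0)
    (μ : Measure α) [IsFiniteMeasure μ] {f : α → ℝ} (hf : MemLp f 2 μ) :
    MemLp (μ[f|m]) 2 μ := by
  haveI : SigmaFinite (μ.trim hm) := inferInstance
  set g : lpMeas ℝ ℝ m 2 μ := condExpL2 ℝ ℝ hm (hf.toLp f) with hg
  have hcoe : MemLp (g : α → ℝ) 2 μ := Lp.memLp (g : Lp ℝ 2 μ)
  have hae : (g : α → ℝ) =ᵐ[μ] μ[f|m] := by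
    refine ae_eq_condExp_of_forall_setIntegral_eq hm (hf.integrable one_le_two)
      (fun s _ _ => (hcoe.integrable one_le_two).integrableOn)
      (fun s hs hμs => ?_) (lpMeas.aestronglyMeasurable g)
    rw [integral_condExpL2_eq hm (hf.toLp f) hs hμs.ne]
    exact setIntegral_congr_ae (hm s hs) ((hf.coeFn_toLp).mono fun x hx _ => hx)
  exact hcoe.ae_eq hae

lemma stmt6_bound {ε z w c d : ℝ} (hz : |z| ≤ 1) (hε : 0 < ε) (hc : ε ≤ c) (hd : ε ≤ d) :
    |z * w / (c * d)| ≤ (ε ^ 2)⁻¹ * |w| := by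
  have hc0 : 0 < c := hε.trans_le hc
  have hd0 : 0 < d := hε.trans_le hd
  have h1 : |z * w / (c * d)| = |z| * |w| / (c * d) := by
    rw [abs_div, abs_mul, abs_of_pos (mul_pos hc0 hd0)]
  rw [h1, div_le_iff₀ (mul_pos hc0 hd0)]
  have h2 : |z| * |w| ≤ |w| := by nlinarith [abs_nonneg w, abs_nonneg z]
  have h3 : ε ^ 2 ≤ c * d := by nlinarith
  have h4 : 0 ≤ (ε ^ 2)⁻¹ * |w| := by positivity
  calc |z| * |w| ≤ |w| := h2
    _ = (ε ^ 2)⁻¹ * |w| * ε ^ 2 := by field_simp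
    _ ≤ (ε ^ 2)⁻¹ * |w| * (c * d) := by nlinarith

theorem stmt6
    {Ω 𝒳 : Type*} [MeasurableSpace Ω] [MeasurableSpace 𝒳]
    (P : Measure Ω) [IsProbabilityMeasure P]
    (Y D Z : Ω → ℝ) (X : Ω → 𝒳)
    (hYm : Measurable Y) (hDm : Measurable D) (hZm : Measurable Z) (hXm : Measurable X)
    (hDval : ∀ ω, D ω = 0 ∨ D ω = 1) (hZval : ∀ ω, Z ω = 0 ∨ Z ω = 1)
    (g0 : ℝ → 𝒳 → ℝ) (p0 : 𝒳 → ℝ)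
    (hg0m : Measurable (Function.uncurry g0)) (hp0m : Measurable p0)
    (hp0val : ∀ x, 0 < p0 x ∧ p0 x < 1)
    (hcZ : P[Z | MeasurableSpace.comap X inferInstance] =ᵐ[P] fun ω => p0 (X ω))
    (ε : ℝ) (hε : ε ∈ Set.Ioo (0 : ℝ) (1 / 2))
    (c₁ : ℝ) (hc₁ : 0 < c₁)
    (hY2 : MemLp Y 2 P)
    (hcY : P[Y | MeasurableSpace.comap (fun ω => (Z ω, X ω)) inferInstance]
        =ᵐ[P] fun ω => g0 (Z ω) (X ω))
    (hcondvar : ∀ᵐ ω ∂P,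
      (P[fun ω' => (Y ω' - g0 (Z ω') (X ω')) ^ 2 | MeasurableSpace.comap X inferInstance]) ω
        ≤ c₁)
    (g1 : 𝒳 → ℝ) (p : 𝒳 → ℝ)
    (hg1m : Measurable g1) (hpm : Measurable p)
    (hpval : ∀ x, 0 < p x ∧ p x < 1)
    (hpbd : ∀ᵐ ω ∂P, ε ≤ p (X ω) ∧ p (X ω) ≤ 1 - ε)
    (hp0bd : ∀ᵐ ω ∂P, ε ≤ p0 (X ω) ∧ p0 (X ω) ≤ 1 - ε)
    (hgd : MemLp (fun ω => g1 (X ω) - g0 1 (X ω)) 2 P)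
    (hpd : MemLp (fun ω => p (X ω) - p0 (X ω)) 2 P) :
    eLpNorm (fun ω =>
        Z ω * (Y ω - g1 (X ω)) / p (X ω) - Z ω * (Y ω - g0 1 (X ω)) / p0 (X ω)) 2 P
      ≤ ENNReal.ofReal (ε ^ (-2 : ℝ))
          * (eLpNorm (fun ω => g1 (X ω) - g0 1 (X ω)) 2 P
              + ENNReal.ofReal (Real.sqrt c₁)
                  * eLpNorm (fun ω => p (X ω) - p0 (X ω)) 2 P) := by
  obtain ⟨hε0, hε2⟩ := hε
  have hε1 : ε ≤ 1 := by linarith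
  set r : ℝ := (ε ^ 2)⁻¹ with hr_def
  have hr0 : 0 ≤ r := by positivity
  -- σ-algebras
  have hmX : MeasurableSpace.comap X inferInstance ≤ ‹MeasurableSpace Ω› := hXm.comap_le
  have hmZX : MeasurableSpace.comap (fun ω => (Z ω, X ω)) inferInstance
      ≤ ‹MeasurableSpace Ω› := (hZm.prodMk hXm).comap_le
  -- measurability
  have hg00m : Measurable (fun ω => g0 1 (X ω)) :=
    hg0m.comp (measurable_const.prodMk hXm)
  have hg0ZXm : Measurable (fun ω => g0 (Z ω) (X ω)) := hg0m.comp (hZm.prodMk hXm)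
  have hdm : Measurable (fun ω => Y ω - g0 (Z ω) (X ω)) := hYm.sub hg0ZXm
  have hpdm : Measurable (fun ω => p (X ω) - p0 (X ω)) := (hpm.comp hXm).sub (hp0m.comp hXm)
  have hZabs : ∀ ω, |Z ω| ≤ 1 := fun ω => by rcases hZval ω with h | h <;> simp [h]
  -- L² facts
  have hg0ZX2 : MemLp (fun ω => g0 (Z ω) (X ω)) 2 P :=
    (memLp_two_condexp_aux hmZX P hY2).ae_eq hcY
  have hhd2 : MemLp (fun ω => Y ω - g0 (Z ω) (X ω)) 2 P := hY2.sub hg0ZX2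
  have hv_int : Integrable (fun ω => (Y ω - g0 (Z ω) (X ω)) ^ 2) P :=
    (memLp_two_iff_integrable_sq hhd2.aestronglyMeasurable).1 hhd2
  have hq_int : Integrable (fun ω => (p (X ω) - p0 (X ω)) ^ 2) P :=
    (memLp_two_iff_integrable_sq hpd.aestronglyMeasurable).1 hpd
  have hq_bd : ∀ ω, ‖(p (X ω) - p0 (X ω)) ^ 2‖ ≤ 1 := by
    intro ω
    have h1 := hpval (X ω); have h2 := hp0val (X ω)
    rw [Real.norm_eq_abs, abs_le]
    constructor <;> nlinarith [h1.1, h1.2, h2.1, h2.2]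
  have hqmeas : Measurable (fun ω => (p (X ω) - p0 (X ω)) ^ 2) := hpdm.pow_const 2
  have hqv_int : Integrable
      (fun ω => (p (X ω) - p0 (X ω)) ^ 2 * (Y ω - g0 (Z ω) (X ω)) ^ 2) P :=
    hv_int.bdd_mul hqmeas.aestronglyMeasurable (Filter.Eventually.of_forall hq_bd)
  -- conditional expectation pull-out
  have hXmX : Measurable[MeasurableSpace.comap X inferInstance] X :=
    Measurable.of_comap_le le_rfl
  have hqmX : StronglyMeasurable[MeasurableSpace.comap X inferInstance]
      (fun ω => (p (X ω) - p0 (X ω)) ^ 2) :=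
    (((hpm.sub hp0m).pow_const 2).comp hXmX).stronglyMeasurable
  have hpull : P[(fun ω => (p (X ω) - p0 (X ω)) ^ 2) *
        (fun ω => (Y ω - g0 (Z ω) (X ω)) ^ 2) | MeasurableSpace.comap X inferInstance]
      =ᵐ[P] (fun ω => (p (X ω) - p0 (X ω)) ^ 2) *
        P[(fun ω => (Y ω - g0 (Z ω) (X ω)) ^ 2) | MeasurableSpace.comap X inferInstance] :=
    condExp_mul_of_stronglyMeasurable_left hqmX hqv_int hv_int
  -- the key integral inequality
  have key : ∫ ω, (p (X ω) - p0 (X ω)) ^ 2 * (Y ω - g0 (Z ω) (X ω)) ^ 2 ∂P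
      ≤ c₁ * ∫ ω, (p (X ω) - p0 (X ω)) ^ 2 ∂P := by
    have h1 : ∫ ω, (p (X ω) - p0 (X ω)) ^ 2 * (Y ω - g0 (Z ω) (X ω)) ^ 2 ∂P
        = ∫ ω, (P[(fun ω => (p (X ω) - p0 (X ω)) ^ 2) *
            (fun ω => (Y ω - g0 (Z ω) (X ω)) ^ 2) | MeasurableSpace.comap X inferInstance]) ω ∂P :=
      (integral_condExp hmX).symm
    rw [h1, integral_congr_ae hpull]
    have hint1 : Integrable (fun ω => (p (X ω) - p0 (X ω)) ^ 2 *
        (P[(fun ω => (Y ω - g0 (Z ω) (X ω)) ^ 2) |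
          MeasurableSpace.comap X inferInstance]) ω) P :=
      integrable_condExp.bdd_mul hqmeas.aestronglyMeasurable (Filter.Eventually.of_forall hq_bd)
    have hint2 : Integrable (fun ω => (p (X ω) - p0 (X ω)) ^ 2 * c₁) P := hq_int.mul_const c₁
    have hb : ∀ᵐ ω ∂P, (fun ω => (p (X ω) - p0 (X ω)) ^ 2 *
        (P[(fun ω => (Y ω - g0 (Z ω) (X ω)) ^ 2) |
          MeasurableSpace.comap X inferInstance]) ω) ω
        ≤ (p (X ω) - p0 (X ω)) ^ 2 * c₁ := by
      filter_upwards [hcondvar] with ω hc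
      exact mul_le_mul_of_nonneg_left hc (sq_nonneg _)
    calc ∫ ω, ((fun ω => (p (X ω) - p0 (X ω)) ^ 2) *
          P[(fun ω => (Y ω - g0 (Z ω) (X ω)) ^ 2) |
            MeasurableSpace.comap X inferInstance]) ω ∂P
        ≤ ∫ ω, (p (X ω) - p0 (X ω)) ^ 2 * c₁ ∂P := integral_mono_ae hint1 hint2 hb
      _ = c₁ * ∫ ω, (p (X ω) - p0 (X ω)) ^ 2 ∂P := by
          rw [integral_mul_const]; ring
  -- MemLp of the product
  have hh2 : MemLp (fun ω => (Y ω - g0 (Z ω) (X ω)) * (p (X ω) - p0 (X ω))) 2 P := by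
    rw [memLp_two_iff_integrable_sq (f := fun ω => (Y ω - g0 (Z ω) (X ω)) * (p (X ω) - p0 (X ω)))
      (hdm.mul hpdm).aestronglyMeasurable]
    exact hqv_int.congr (Filter.Eventually.of_forall fun ω => by ring)
  -- eLpNorm of the product is bounded
  have hstep : eLpNorm (fun ω => (Y ω - g0 (Z ω) (X ω)) * (p (X ω) - p0 (X ω))) 2 P
      ≤ ENNReal.ofReal (Real.sqrt c₁)
          * eLpNorm (fun ω => p (X ω) - p0 (X ω)) 2 P := by
    rw [hh2.eLpNorm_eq_integral_rpow_norm two_ne_zero ENNReal.ofNat_ne_top,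
      hpd.eLpNorm_eq_integral_rpow_norm two_ne_zero ENNReal.ofNat_ne_top,
      ← ENNReal.ofReal_mul (Real.sqrt_nonneg c₁)]
    apply ENNReal.ofReal_le_ofReal
    have htwo : (2 : ℝ≥0∞).toReal = 2 := by simp
    rw [htwo]
    simp_rw [Real.rpow_two, Real.norm_eq_abs, sq_abs]
    rw [show ((2 : ℝ))⁻¹ = (1 / 2 : ℝ) by norm_num, ← Real.sqrt_eq_rpow, ← Real.sqrt_eq_rpow,
      ← Real.sqrt_mul hc₁.le]
    apply Real.sqrt_le_sqrt
    calc ∫ a, ((Y a - g0 (Z a) (X a)) * (p (X a) - p0 (X a))) ^ 2 ∂P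
        = ∫ ω, (p (X ω) - p0 (X ω)) ^ 2 * (Y ω - g0 (Z ω) (X ω)) ^ 2 ∂P :=
          integral_congr_ae (Filter.Eventually.of_forall fun ω => by ring)
      _ ≤ c₁ * ∫ ω, (p (X ω) - p0 (X ω)) ^ 2 ∂P := key
  -- decomposition
  have hident : (fun ω => Z ω * (Y ω - g1 (X ω)) / p (X ω)
      - Z ω * (Y ω - g0 1 (X ω)) / p0 (X ω))
      = fun ω => Z ω * (g0 1 (X ω) - g1 (X ω)) / p (X ω)
        + Z ω * ((Y ω - g0 (Z ω) (X ω)) * (p0 (X ω) - p (X ω))) / (p (X ω) * p0 (X ω)) := by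
    funext ω
    have hp1 : p (X ω) ≠ 0 := (hpval (X ω)).1.ne'
    have hp2 : p0 (X ω) ≠ 0 := (hp0val (X ω)).1.ne'
    rcases hZval ω with h | h
    · simp [h]
    · rw [h]
      field_simp
      ring
  have hAm : Measurable (fun ω => Z ω * (g0 1 (X ω) - g1 (X ω)) / p (X ω)) :=
    (hZm.mul (hg00m.sub (hg1m.comp hXm))).div (hpm.comp hXm)
  have hBm : Measurable (fun ω => Z ω * ((Y ω - g0 (Z ω) (X ω)) * (p0 (X ω) - p (X ω)))
      / (p (X ω) * p0 (X ω))) :=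
    (hZm.mul (hdm.mul ((hp0m.comp hXm).sub (hpm.comp hXm)))).div
      ((hpm.comp hXm).mul (hp0m.comp hXm))
  -- bound for the first term
  have hA : eLpNorm (fun ω => Z ω * (g0 1 (X ω) - g1 (X ω)) / p (X ω)) 2 P
      ≤ ENNReal.ofReal r * eLpNorm (fun ω => g1 (X ω) - g0 1 (X ω)) 2 P := by
    have hmono : eLpNorm (fun ω => Z ω * (g0 1 (X ω) - g1 (X ω)) / p (X ω)) 2 P
        ≤ eLpNorm (r • fun ω => g1 (X ω) - g0 1 (X ω)) 2 P := by
      apply eLpNorm_mono_ae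
      filter_upwards [hpbd] with ω hω
      have hb := stmt6_bound (w := g0 1 (X ω) - g1 (X ω)) (d := (1 : ℝ))
        (hZabs ω) hε0 hω.1 hε1
      rw [mul_one] at hb
      simp only [Pi.smul_apply, smul_eq_mul, Real.norm_eq_abs]
      calc |Z ω * (g0 1 (X ω) - g1 (X ω)) / p (X ω)|
          ≤ (ε ^ 2)⁻¹ * |g0 1 (X ω) - g1 (X ω)| := hb
        _ = |r * (g1 (X ω) - g0 1 (X ω))| := by
            rw [abs_mul, abs_of_nonneg hr0, abs_sub_comm (g1 (X ω))]
    rwa [eLpNorm_const_smul, Real.enorm_eq_ofReal hr0] at hmono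
  -- bound for the second term
  have hB : eLpNorm (fun ω => Z ω * ((Y ω - g0 (Z ω) (X ω)) * (p0 (X ω) - p (X ω)))
        / (p (X ω) * p0 (X ω))) 2 P
      ≤ ENNReal.ofReal r
          * eLpNorm (fun ω => (Y ω - g0 (Z ω) (X ω)) * (p (X ω) - p0 (X ω))) 2 P := by
    have hmono : eLpNorm (fun ω => Z ω * ((Y ω - g0 (Z ω) (X ω)) * (p0 (X ω) - p (X ω)))
          / (p (X ω) * p0 (X ω))) 2 P
        ≤ eLpNorm (r • fun ω => (Y ω - g0 (Z ω) (X ω)) * (p (X ω) - p0 (X ω))) 2 P := by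
      apply eLpNorm_mono_ae
      filter_upwards [hpbd, hp0bd] with ω h1 h2
      have hb := stmt6_bound (w := (Y ω - g0 (Z ω) (X ω)) * (p0 (X ω) - p (X ω)))
        (hZabs ω) hε0 h1.1 h2.1
      simp only [Pi.smul_apply, smul_eq_mul, Real.norm_eq_abs]
      calc |Z ω * ((Y ω - g0 (Z ω) (X ω)) * (p0 (X ω) - p (X ω))) / (p (X ω) * p0 (X ω))|
          ≤ (ε ^ 2)⁻¹ * |(Y ω - g0 (Z ω) (X ω)) * (p0 (X ω) - p (X ω))| := hb
        _ = |r * ((Y ω - g0 (Z ω) (X ω)) * (p (X ω) - p0 (X ω)))| := by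
            simp only [abs_mul, abs_of_nonneg hr0]
            rw [abs_sub_comm (p0 (X ω))]
    rwa [eLpNorm_const_smul, Real.enorm_eq_ofReal hr0] at hmono
  -- put everything together
  have hrε : ENNReal.ofReal (ε ^ (-2 : ℝ)) = ENNReal.ofReal r := by
    rw [hr_def, Real.rpow_neg hε0.le, Real.rpow_two]
  rw [hident, hrε]
  calc eLpNorm (fun ω => Z ω * (g0 1 (X ω) - g1 (X ω)) / p (X ω)
        + Z ω * ((Y ω - g0 (Z ω) (X ω)) * (p0 (X ω) - p (X ω))) / (p (X ω) * p0 (X ω))) 2 P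
      ≤ eLpNorm (fun ω => Z ω * (g0 1 (X ω) - g1 (X ω)) / p (X ω)) 2 P
        + eLpNorm (fun ω => Z ω * ((Y ω - g0 (Z ω) (X ω)) * (p0 (X ω) - p (X ω)))
            / (p (X ω) * p0 (X ω))) 2 P := by
        exact eLpNorm_add_le hAm.aestronglyMeasurable hBm.aestronglyMeasurable one_le_two
    _ ≤ ENNReal.ofReal r * eLpNorm (fun ω => g1 (X ω) - g0 1 (X ω)) 2 P
        + ENNReal.ofReal r * (ENNReal.ofReal (Real.sqrt c₁)
            * eLpNorm (fun ω => p (X ω) - p0 (X ω)) 2 P) :=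
        add_le_add hA (hB.trans (mul_le_mul_right hstep _))
    _ = ENNReal.ofReal r * (eLpNorm (fun ω => g1 (X ω) - g0 1 (X ω)) 2 P
        + ENNReal.ofReal (Real.sqrt c₁) * eLpNorm (fun ω => p (X ω) - p0 (X ω)) 2 P) :=
        (mul_add _ _ _).symm
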